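/- Let n ≥ 1 and d ≥ 1 be integers and let x_1, …, x_n ∈ ℝ^d. For every m ∈ {1,…,n} and every p ∈ {1,…,d}, the sum over i ≠ m of (|x_{m,p} − x_{i,p}| + Σ_{j=1}^d |δ_{pj} − (x_{m,p} − x_{i,p})·(x_{m,j} − x_{i,j})|)·exp(−‖x_m − x_i‖²/2) is at most u_G(n,d) = (n−1)·((1+√(1+4d))/2)·exp(−(1+2d−√(1+4d))/(4d)), where δ_{pj} is the Kronecker delta. -/

import Mathlib

lemma caseA (c D u v : ℝ) (hc : 8/5 ≤ c) (hD2 : D^2 = c^2 - c)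
    (hu : 0 ≤ u) (h1 : u ≤ 1) (hv : 0 ≤ v) :
    u + (1 - u^2) + u * D * v ≤ (c+1)/2 + c * ((u^2+v^2)/2) := by
  nlinarith [sq_nonneg (c*v - D*u), mul_nonneg (by linarith : (0:ℝ) ≤ c) (sq_nonneg (3*u - 1)),
    sq_nonneg (3*u - 1)]

lemma caseB (c u v : ℝ) (hc : 8/5 ≤ c) (h1 : 1 ≤ u) (hv : 0 ≤ v) :
    u + u^2 - 1 + c * (u*v)
      ≤ c + (c*((u^2+v^2-1)/2) + 1/2) + (c*((u^2+v^2-1)/2)^2 + (u^2+v^2-1)/2)/2 := by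
  have hA : (0:ℝ) ≤ (c - 8/5) * (1/2 + (u-v)^2/2 + (u^2+v^2-1)^2/8) :=
    mul_nonneg (by linarith) (by positivity)
  have hB : (0:ℝ) ≤ 41/20 + (1/20)*u^2 + (21/20)*v^2 - u - (8/5)*u*v
      + (1/5)*(u^2+v^2-1)^2 := by
    nlinarith [sq_nonneg (3*(u^2+v^2) - 8), sq_nonneg (u - v - 1), sq_nonneg (2*u - 3),
      sq_nonneg (3*u - 2*v - 2), sq_nonneg (u + v - 2), sq_nonneg (u*v - 1)]
  nlinarith [hA, hB]

set_option maxHeartbeats 1000000 in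
lemma core_aux {d : ℕ} (hd : 1 ≤ d) (u v : ℝ) (hu : 0 ≤ u) (hv : 0 ≤ v) :
    (u + |1 - u^2| + u * Real.sqrt d * v) * Real.exp (-(u^2+v^2)/2)
      ≤ ((1 + Real.sqrt (1 + 4*(d:ℝ)))/2) *
        Real.exp (-(1 + 2*(d:ℝ) - Real.sqrt (1 + 4*(d:ℝ)))/(4*(d:ℝ))) := by
  have hd1 : (1:ℝ) ≤ (d:ℝ) := by exact_mod_cast hd
  have hd0 : (0:ℝ) < (d:ℝ) := by linarith
  set s : ℝ := Real.sqrt (1 + 4*(d:ℝ)) with hs_def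
  set D : ℝ := Real.sqrt d with hD_def
  have hs0 : 0 ≤ s := Real.sqrt_nonneg _
  have hs2 : s^2 = 1 + 4*(d:ℝ) := Real.sq_sqrt (by positivity)
  have hD0 : 0 ≤ D := Real.sqrt_nonneg _
  have hD2 : D^2 = (d:ℝ) := Real.sq_sqrt (by positivity)
  have hs : 11/5 ≤ s := by nlinarith
  set c : ℝ := (1 + s)/2 with hc_def
  have hc : 8/5 ≤ c := by rw [hc_def]; linarith
  have hc0 : 0 < c := by linarith
  have hc2 : c^2 = c + (d:ℝ) := by rw [hc_def]; nlinarith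
  have hcD : D ≤ c := by nlinarith
  set t : ℝ := (1 + 2*(d:ℝ) - s)/(4*(d:ℝ)) with ht_def
  have hct : c * t = (c - 1)/2 := by
    rw [ht_def, hc_def]
    rw [div_mul_div_comm, div_eq_div_iff (by positivity) (by norm_num)]
    nlinarith [hs2]
  set y : ℝ := (u^2 + v^2)/2 with hy_def
  have key : u + |1 - u^2| + u * D * v ≤ c * Real.exp (y - t) := by
    rcases le_or_gt u 1 with h1 | h1
    · have habs : |1 - u^2| = 1 - u^2 := abs_of_nonneg (by nlinarith)
      rw [habs]
      have hlin : c * (1 + (y - t)) ≤ c * Real.exp (y - t) :=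
        mul_le_mul_of_nonneg_left (by linarith [Real.add_one_le_exp (y - t)]) hc0.le
      refine le_trans ?_ hlin
      have expand : c * (1 + (y - t)) = c + c * y - c * t := by ring
      rw [expand, hct, hy_def]
      have := caseA c D u v hc (by linarith [hc2, hD2]) hu h1 hv
      linarith
    · have habs : |1 - u^2| = u^2 - 1 := by
        rw [abs_of_nonpos (by nlinarith)]; ring
      rw [habs]
      set q : ℝ := (u^2 + v^2 - 1)/2 with hq_def
      have hq0 : 0 ≤ q := by rw [hq_def]; nlinarith
      set x : ℝ := y - t with hx_def
      have hce : 2*c*x = 2*c*q + 1 := by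
        rw [hx_def, hy_def, hq_def]; linear_combination (-2 : ℝ) * hct
      have hx0 : 0 ≤ x := by nlinarith [hce, mul_nonneg hc0.le hq0, hc0]
      have hcx : c * x = c * q + 1/2 := by linear_combination hce / 2
      have hxx : c*q^2 + q ≤ c * x^2 := by
        have h4 : (2*c*x)^2 = (2*c*q+1)^2 := by rw [hce]
        nlinarith [h4, hc0]
      have hquad : c * (1 + x + x^2/2) ≤ c * Real.exp x :=
        mul_le_mul_of_nonneg_left (Real.quadratic_le_exp_of_nonneg hx0) hc0.le
      refine le_trans ?_ hquad
      have hDv : u * D * v ≤ c * (u * v) := by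
        have h := mul_nonneg hu hv
        nlinarith
      have hmain := caseB c u v hc h1.le hv
      rw [← hq_def] at hmain
      have hexp : c * (1 + x + x^2/2) = c + c*x + (c*x^2)/2 := by ring
      rw [hexp, hcx]
      nlinarith [hxx, hmain, hDv]
  calc (u + |1 - u^2| + u * D * v) * Real.exp (-(u^2+v^2)/2)
      ≤ (c * Real.exp (y - t)) * Real.exp (-(u^2+v^2)/2) := by
        apply mul_le_mul_of_nonneg_right key (Real.exp_pos _).le
    _ = c * Real.exp (-t) := by
        rw [mul_assoc, ← Real.exp_add]
        congr 1
        rw [hy_def]; ring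
    _ = c * Real.exp (-(1 + 2*(d:ℝ) - s)/(4*(d:ℝ))) := by rw [ht_def, neg_div]

lemma term_bound {d : ℕ} (hd : 1 ≤ d) (a : EuclideanSpace ℝ (Fin d)) (p : Fin d) :
    (|a p| + ∑ j, |(if p = j then (1:ℝ) else 0) - a p * a j|) * Real.exp (-‖a‖^2/2)
      ≤ ((1 + Real.sqrt (1 + 4*(d:ℝ)))/2) *
        Real.exp (-(1 + 2*(d:ℝ) - Real.sqrt (1 + 4*(d:ℝ)))/(4*(d:ℝ))) := by
  have hnorm : ‖a‖^2 = ∑ j, (a j)^2 := by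
    rw [EuclideanSpace.norm_eq, Real.sq_sqrt (by positivity)]
    simp [Real.norm_eq_abs, sq_abs]
  set u : ℝ := |a p| with hu_def
  have hu : 0 ≤ u := abs_nonneg _
  set v : ℝ := Real.sqrt (∑ j ∈ Finset.univ.erase p, (a j)^2) with hv_def
  have hv : 0 ≤ v := Real.sqrt_nonneg _
  have hv2 : v^2 = ∑ j ∈ Finset.univ.erase p, (a j)^2 :=
    Real.sq_sqrt (Finset.sum_nonneg fun j _ => sq_nonneg _)
  have hsum : u^2 + v^2 = ‖a‖^2 := by
    rw [hnorm, hv2, hu_def, sq_abs]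
    exact Finset.add_sum_erase _ (fun j => a j ^ 2) (Finset.mem_univ p)
  have hCS : ∑ j ∈ Finset.univ.erase p, |a j| ≤ Real.sqrt d * v := by
    have h1 : (∑ j ∈ Finset.univ.erase p, |a j|)^2 ≤ (d:ℝ) * v^2 := by
      have := Finset.sum_mul_sq_le_sq_mul_sq (Finset.univ.erase p)
        (fun _ => (1:ℝ)) (fun j => |a j|)
      simp only [one_pow, one_mul, sq_abs] at this
      have hcard : ((Finset.univ.erase p).card : ℝ) ≤ (d:ℝ) := by
        have : (Finset.univ.erase p).card ≤ d := by
          calc (Finset.univ.erase p).card ≤ Finset.univ.card := Finset.card_erase_le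
            _ = d := by simp
        exact_mod_cast this
      rw [hv2]
      calc (∑ j ∈ Finset.univ.erase p, |a j|)^2
          ≤ (∑ _j ∈ Finset.univ.erase p, (1:ℝ)) * ∑ j ∈ Finset.univ.erase p, (a j)^2 :=
            this
        _ ≤ (d:ℝ) * ∑ j ∈ Finset.univ.erase p, (a j)^2 := by
            apply mul_le_mul_of_nonneg_right _ (Finset.sum_nonneg fun j _ => sq_nonneg _)
            simpa using hcard
    have hS : 0 ≤ ∑ j ∈ Finset.univ.erase p, |a j| :=
      Finset.sum_nonneg fun j _ => abs_nonneg _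
    have hrd : 0 ≤ Real.sqrt d * v := mul_nonneg (Real.sqrt_nonneg _) hv
    nlinarith [h1, Real.sq_sqrt (show (0:ℝ) ≤ d by positivity), hS, hrd]
  have hterm : ∑ j, |(if p = j then (1:ℝ) else 0) - a p * a j|
      ≤ |1 - u^2| + u * Real.sqrt d * v := by
    rw [← Finset.add_sum_erase _
      (fun j => |(if p = j then (1:ℝ) else 0) - a p * a j|) (Finset.mem_univ p)]
    have h1 : |(if p = p then (1:ℝ) else 0) - a p * a p| = |1 - u^2| := by
      rw [if_pos rfl, hu_def, sq_abs]; ring_nf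
    have h2 : ∑ j ∈ Finset.univ.erase p, |(if p = j then (1:ℝ) else 0) - a p * a j|
        = u * ∑ j ∈ Finset.univ.erase p, |a j| := by
      rw [Finset.mul_sum]
      refine Finset.sum_congr rfl fun j hj => ?_
      rw [if_neg (fun h => (Finset.ne_of_mem_erase hj) h.symm), zero_sub, abs_neg, abs_mul,
        hu_def]
    rw [h1, h2]
    have : u * ∑ j ∈ Finset.univ.erase p, |a j| ≤ u * (Real.sqrt d * v) :=
      mul_le_mul_of_nonneg_left hCS hu
    linarith [this]
  calc (|a p| + ∑ j, |(if p = j then (1:ℝ) else 0) - a p * a j|) * Real.exp (-‖a‖^2/2)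
      ≤ (u + (|1 - u^2| + u * Real.sqrt d * v)) * Real.exp (-‖a‖^2/2) := by
        apply mul_le_mul_of_nonneg_right _ (Real.exp_pos _).le
        rw [hu_def]
        exact add_le_add_right hterm _
    _ = (u + |1 - u^2| + u * Real.sqrt d * v) * Real.exp (-(u^2+v^2)/2) := by
        rw [hsum]; ring_nf
    _ ≤ _ := core_aux hd u v hu hv
/-- Upper bound `u_G(n,d)` on the off-diagonal row sums of the gradient-enhanced
Gaussian kernel matrix. -/
noncomputable def uG (n d : ℕ) : ℝ :=
  ((n : ℝ) - 1) * ((1 + Real.sqrt (1 + 4 * (d : ℝ))) / 2) *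
    Real.exp (-(1 + 2 * (d : ℝ) - Real.sqrt (1 + 4 * (d : ℝ))) / (4 * (d : ℝ)))

/-- For points `x_1, …, x_n ∈ ℝ^d`, every `m ∈ {1,…,n}` and every `p ∈ {1,…,d}`,
the sum over `i ≠ m` of
`(|x_{m,p} − x_{i,p}| + Σ_j |δ_{pj} − (x_{m,p} − x_{i,p})(x_{m,j} − x_{i,j})|) · exp(−‖x_m − x_i‖²/2)`
is at most `u_G(n,d)`. -/
theorem stmt_3 {n d : ℕ} (hn : 1 ≤ n) (hd : 1 ≤ d)
    (x : Fin n → EuclideanSpace ℝ (Fin d)) (m : Fin n) (p : Fin d) :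
    ∑ i ∈ Finset.univ.erase m,
      (|x m p - x i p| +
        ∑ j, |(if p = j then (1 : ℝ) else 0) - (x m p - x i p) * (x m j - x i j)|) *
        Real.exp (-‖x m - x i‖ ^ 2 / 2) ≤ uG n d := by
  set C : ℝ := (1 + Real.sqrt (1 + 4*(d:ℝ)))/2 with hC_def
  set E : ℝ := Real.exp (-(1 + 2*(d:ℝ) - Real.sqrt (1 + 4*(d:ℝ)))/(4*(d:ℝ))) with hE_def
  have key : ∀ i ∈ Finset.univ.erase m,
      (|x m p - x i p| +
        ∑ j, |(if p = j then (1 : ℝ) else 0) - (x m p - x i p) * (x m j - x i j)|) *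
        Real.exp (-‖x m - x i‖ ^ 2 / 2) ≤ C * E := by
    intro i _
    have h := term_bound hd (x m - x i) p
    have happ : ∀ j, (x m - x i) j = x m j - x i j := fun j => rfl
    simp only [happ] at h
    rw [hC_def, hE_def]
    exact h
  calc ∑ i ∈ Finset.univ.erase m,
      (|x m p - x i p| +
        ∑ j, |(if p = j then (1 : ℝ) else 0) - (x m p - x i p) * (x m j - x i j)|) *
        Real.exp (-‖x m - x i‖ ^ 2 / 2)
      ≤ ∑ _i ∈ Finset.univ.erase m, C * E := Finset.sum_le_sum key
    _ = ((n:ℝ) - 1) * (C * E) := by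
        rw [Finset.sum_const, Finset.card_erase_of_mem (Finset.mem_univ m),
          Finset.card_univ, Fintype.card_fin, nsmul_eq_mul, Nat.cast_sub hn, Nat.cast_one]
    _ = uG n d := by rw [uG, hC_def, hE_def]; ring
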